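/- Let F be a field of characteristic p > 0 and let G be a finite p-group whose nilpotency class is at most 2. Then the group algebra F[G] is a centrally essential ring. -/

import Mathlib

/-- A ring `R` is *centrally essential* if for every nonzero `r ∈ R` there is a central
element `c` such that `c * r` is a nonzero central element. -/
def IsCentrallyEssential (R : Type*) [Ring R] : Prop :=
  ∀ r : R, r ≠ 0 → ∃ c ∈ Subring.center R, c * r ≠ 0 ∧ c * r ∈ Subring.center R

/-- The image in the group algebra of a central group element is central. -/
lemma single_center_mem (F : Type*) [Field F] {G : Type*} [Group G] {z : G}
    (hz : z ∈ Subgroup.center G) :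
    (MonoidAlgebra.single z (1 : F)) ∈ Subring.center (MonoidAlgebra F G) := by
  rw [Subring.mem_center_iff]
  intro b
  ext x
  rw [MonoidAlgebra.mul_single_apply, MonoidAlgebra.single_mul_apply, one_mul, mul_one]
  congr 1
  have hz' : z⁻¹ ∈ Subgroup.center G := (Subgroup.center G).inv_mem hz
  exact Subgroup.mem_center_iff.mp hz' x

theorem centrally_essential_of_nilpotency_class_le_two
    (F : Type*) [Field F] (p : ℕ) [Fact p.Prime] [CharP F p]
    (G : Type*) [Group G] [Fintype G] (hG : IsPGroup p G)
    (h2 : upperCentralSeries G 2 = ⊤) :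
    IsCentrallyEssential (MonoidAlgebra F G) := by
  classical
  haveI : CharP (MonoidAlgebra F G) p := charP_of_injective_algebraMap' F p
  -- every commutator lies in the center of `G`
  have hcomm : ∀ x g : G, x * g⁻¹ * x⁻¹ * g ∈ Subgroup.center G := by
    intro x g
    have hx : x ∈ upperCentralSeries G 2 := by rw [h2]; exact Subgroup.mem_top x
    have := (mem_upperCentralSeries_succ_iff (n := 1)).mp hx g⁻¹
    rw [upperCentralSeries_one, commutatorElement_def, inv_inv] at this
    exact this
  -- an element of the group algebra invariant under translation by the center is central
  have central_of_inv : ∀ w : MonoidAlgebra F G,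
      (∀ z ∈ Subgroup.center G, MonoidAlgebra.single z (1 : F) * w = w) →
      w ∈ Subring.center (MonoidAlgebra F G) := by
    intro w hw
    rw [Subring.mem_center_iff]
    intro b
    induction b using MonoidAlgebra.induction_linear with
    | zero => simp
    | add f g hf hg => rw [add_mul, mul_add, hf, hg]
    | single g a =>
      show MonoidAlgebra.single g a * w = w * MonoidAlgebra.single g a
      ext x
      rw [MonoidAlgebra.mul_single_apply, MonoidAlgebra.single_mul_apply, mul_comm]
      congr 1
      have hz := hcomm x g
      have h3 := congrArg (fun u : MonoidAlgebra F G => u.coeff (x * g⁻¹)) (hw _ hz)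
      simp only [MonoidAlgebra.single_mul_apply, one_mul] at h3
      rw [← h3]
      congr 1
      group
  -- the element `single z 1 - 1` is nilpotent for central `z`
  set q : ℕ := Nat.card (Subgroup.center G) with hqdef
  obtain ⟨k, hk⟩ := IsPGroup.iff_card.mp (hG.to_subgroup (Subgroup.center G))
  have hq : ∀ z ∈ Subgroup.center G,
      ((MonoidAlgebra.single z (1 : F) : MonoidAlgebra F G) - 1) ^ q = 0 := by
    intro z hz
    have hzq : z ^ q = 1 := by
      have h1 : (⟨z, hz⟩ : Subgroup.center G) ^ q = 1 := pow_card_eq_one'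
      simpa using congrArg Subtype.val h1
    rw [hqdef, hk] at hzq ⊢
    rw [sub_pow_char_pow_of_commute _ _ (Commute.one_right _), one_pow,
      MonoidAlgebra.single_pow, hzq, one_pow, MonoidAlgebra.one_def, sub_self]
  -- the key inductive construction
  have main : ∀ (l : List G), (∀ z ∈ l, z ∈ Subgroup.center G) →
      ∀ w : MonoidAlgebra F G, w ≠ 0 →
      ∃ c ∈ Subring.center (MonoidAlgebra F G), c * w ≠ 0 ∧
        ∀ z ∈ l, ((MonoidAlgebra.single z (1 : F)) - 1) * (c * w) = 0 := by
    intro l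
    induction l with
    | nil =>
      intro _ w hw
      exact ⟨1, Subring.one_mem _, by simpa, by simp⟩
    | cons z l ih =>
      intro hl w hw
      obtain ⟨c, hc, hcw, hkill⟩ := ih (fun z hz => hl z (List.mem_cons_of_mem _ hz)) w hw
      have hzc : z ∈ Subgroup.center G := hl z List.mem_cons_self
      set δ : MonoidAlgebra F G := (MonoidAlgebra.single z (1 : F)) - 1 with hδ
      have hδc : δ ∈ Subring.center (MonoidAlgebra F G) :=
        Subring.sub_mem _ (single_center_mem F hzc) (Subring.one_mem _)
      have hex : ∃ n, δ ^ n * (c * w) = 0 := ⟨q, by rw [hq z hzc, zero_mul]⟩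
      have hn0 : Nat.find hex ≠ 0 := by
        intro h
        have hs := Nat.find_spec hex
        rw [h, pow_zero, one_mul] at hs
        exact hcw hs
      obtain ⟨m, hm⟩ := Nat.exists_eq_succ_of_ne_zero hn0
      have hne : δ ^ m * (c * w) ≠ 0 := Nat.find_min hex (by omega)
      have hδmc : δ ^ m ∈ Subring.center (MonoidAlgebra F G) := Subring.pow_mem _ hδc m
      refine ⟨δ ^ m * c, Subring.mul_mem _ hδmc hc, by rwa [mul_assoc], ?_⟩
      intro z' hz'
      rcases List.mem_cons.mp hz' with h | h
      · subst h
        have hs := Nat.find_spec hex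
        rw [hm] at hs
        calc δ * (δ ^ m * c * w) = δ * (δ ^ m * (c * w)) := by rw [mul_assoc]
          _ = (δ * δ ^ m) * (c * w) := by rw [mul_assoc]
          _ = δ ^ (m + 1) * (c * w) := by rw [pow_succ, (Subring.mem_center_iff.mp hδmc δ)]
          _ = 0 := hs
      · have h0 := hkill z' h
        set e : MonoidAlgebra F G := (MonoidAlgebra.single z' (1 : F)) - 1 with he
        calc e * (δ ^ m * c * w) = e * (δ ^ m * (c * w)) := by rw [mul_assoc]
          _ = (e * δ ^ m) * (c * w) := by rw [mul_assoc]
          _ = (δ ^ m * e) * (c * w) := by rw [Subring.mem_center_iff.mp hδmc e]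
          _ = δ ^ m * (e * (c * w)) := by rw [mul_assoc]
          _ = 0 := by rw [h0, mul_zero]
  -- conclude
  intro r hr
  haveI : Fintype (Subgroup.center G) := Fintype.ofFinite _
  obtain ⟨c, hc, hcr, hkill⟩ :=
    main (((Finset.univ : Finset (Subgroup.center G)).toList).map Subtype.val)
      (by
        intro z hz
        obtain ⟨z', _, rfl⟩ := List.mem_map.mp hz
        exact z'.2) r hr
  refine ⟨c, hc, hcr, central_of_inv _ ?_⟩
  intro z hz
  have hmem : z ∈ ((Finset.univ : Finset (Subgroup.center G)).toList).map Subtype.val :=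
    List.mem_map.mpr ⟨⟨z, hz⟩, Finset.mem_toList.mpr (Finset.mem_univ _), rfl⟩
  have := hkill z hmem
  rw [sub_mul, one_mul, sub_eq_zero] at this
  exact this
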